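/- Let α, β, u, v be integers with α·u − β·v = 1, 0 < u ≤ β, and 0 ≤ v < α, with α, β ≥ 1. Then in the free group on generators a, t: w(α,β)(a,t) = (w(v,u)(a,t)·t^{-1}) · a·t · (a^{-1}·w(α−v, β−u)(a,t)). In other words, the word obtained from w(α,β)(a,t) by the cyclic permutation moving the final block w(v,u) to the front, followed by replacing the resulting subword t·a (at the junction) by a·t, equals w(α,β)(a,t) again. -/
import Mathlib


/-- substitution a ↦ a, t ↦ a·t (letters: `false` = a, `true` = t) -/
def subT (x : Bool) : List Bool := if x then [false, true] else [false]
/-- substitution a ↦ a·t, t ↦ t -/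
def subA (x : Bool) : List Bool := if x then [true] else [false, true]

/-- The word `w α β` of the paper, defined recursively by `w 1 0 = a`, `w 0 1 = t`,
`w (α+β) β (a,t) = w α β (a, a·t)` and `w α (α+β) (a,t) = w α β (a·t, t)`,
as a positive word in the letters `false` (= a) and `true` (= t). -/
def w : ℕ → ℕ → List Bool
  | 1, 0 => [false]
  | 0, 1 => [true]
  | α + 1, β + 1 =>
      if α > β then (w (α - β) (β + 1)).flatMap subT
      else (w (α + 1) (β - α)).flatMap subA
  | _, _ => []
  termination_by α β => α + β
  decreasing_by all_goals omega


/-- Interpretation of a positive word as an element of the free group on the two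
generators `false` (= a) and `true` (= t). -/
def toF (l : List Bool) : FreeGroup Bool := (l.map FreeGroup.of).prod

/-- The endomorphism a ↦ a, t ↦ a·t. -/
def phiT : FreeGroup Bool →* FreeGroup Bool :=
  FreeGroup.lift (fun x => if x then FreeGroup.of false * FreeGroup.of true
    else FreeGroup.of false)

/-- The endomorphism a ↦ a·t, t ↦ t. -/
def phiA : FreeGroup Bool →* FreeGroup Bool :=
  FreeGroup.lift (fun x => if x then FreeGroup.of true
    else FreeGroup.of false * FreeGroup.of true)

lemma toF_nil : toF [] = 1 := rfl

lemma toF_cons (x : Bool) (l : List Bool) : toF (x :: l) = FreeGroup.of x * toF l := by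
  simp [toF]

lemma toF_append (l₁ l₂ : List Bool) : toF (l₁ ++ l₂) = toF l₁ * toF l₂ := by
  simp [toF]

lemma toF_flatMap_subT (l : List Bool) : toF (l.flatMap subT) = phiT (toF l) := by
  induction l with
  | nil => simp [toF_nil]
  | cons x l ih =>
      rw [List.flatMap_cons, toF_append, toF_cons, map_mul, ih]
      congr 1
      cases x <;> simp [subT, toF, phiT]

lemma toF_flatMap_subA (l : List Bool) : toF (l.flatMap subA) = phiA (toF l) := by
  induction l with
  | nil => simp [toF_nil]
  | cons x l ih =>
      rw [List.flatMap_cons, toF_append, toF_cons, map_mul, ih]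
      congr 1
      cases x <;> simp [subA, toF, phiA]

lemma w_subT (x y : ℕ) (hx : 1 ≤ x) (hy : 1 ≤ y) : w (x+y) y = (w x y).flatMap subT := by
  obtain ⟨a, rfl⟩ : ∃ a, x = a + 1 := ⟨x-1, by omega⟩
  obtain ⟨b, rfl⟩ : ∃ b, y = b + 1 := ⟨y-1, by omega⟩
  rw [show a + 1 + (b+1) = (a + b + 1) + 1 by ring, w]
  rw [if_pos (by omega), show a + b + 1 - b = a + 1 by omega]

lemma w_subA (x y : ℕ) (hx : 1 ≤ x) (hy : 1 ≤ y) : w x (x+y) = (w x y).flatMap subA := by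
  obtain ⟨a, rfl⟩ : ∃ a, x = a + 1 := ⟨x-1, by omega⟩
  obtain ⟨b, rfl⟩ : ∃ b, y = b + 1 := ⟨y-1, by omega⟩
  rw [show a + 1 + (b+1) = (a + b + 1) + 1 by ring, w]
  rw [if_neg (by omega), show a + b + 1 - a = b + 1 by omega]

lemma w_right_zero (x : ℕ) (hx : x ≠ 1) : w x 0 = [] := by
  rcases x with _ | _ | n
  · simp [w]
  · omega
  · simp [w]

lemma w_left_zero (y : ℕ) (hy : y ≠ 1) : w 0 y = [] := by
  rcases y with _ | _ | n
  · simp [w]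
  · omega
  · simp [w]

lemma w_diag (x : ℕ) (hx : 2 ≤ x) : w x x = [] := by
  obtain ⟨a, rfl⟩ : ∃ a, x = a + 1 := ⟨x-1, by omega⟩
  rw [w, if_neg (by omega), Nat.sub_self, w_right_zero (a+1) (by omega)]
  rfl

/-- `toF (w (x+y) y) = phiT (toF (w x y))`, unconditionally. -/
lemma phiT_w (x y : ℕ) : toF (w (x+y) y) = phiT (toF (w x y)) := by
  rcases Nat.eq_zero_or_pos x with rfl | hx
  · rcases Nat.eq_zero_or_pos y with rfl | hy
    · simp [toF_nil, show w 0 0 = [] by simp [w]]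
    · rcases eq_or_ne y 1 with rfl | hy1
      · show toF (w 1 1) = _
        rw [show w 1 1 = [false, true] by simp [w, subA], show w 0 1 = [true] by simp [w]]
        simp [toF, phiT]
      · rw [w_left_zero y hy1, toF_nil, map_one, Nat.zero_add, w_diag y (by omega), toF_nil]
  · rcases Nat.eq_zero_or_pos y with rfl | hy
    · rcases eq_or_ne x 1 with rfl | hx1
      · show toF (w 1 0) = _
        rw [show w 1 0 = [false] by simp [w]]
        simp [toF, phiT]
      · rw [w_right_zero x hx1, w_right_zero (x+0) (by omega), toF_nil, map_one]
    · rw [w_subT x y hx hy, toF_flatMap_subT]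

/-- `toF (w x (x+y)) = phiA (toF (w x y))`, unconditionally. -/
lemma phiA_w (x y : ℕ) : toF (w x (x+y)) = phiA (toF (w x y)) := by
  rcases Nat.eq_zero_or_pos y with rfl | hy
  · rcases Nat.eq_zero_or_pos x with rfl | hx
    · simp [toF_nil, show w 0 0 = [] by simp [w]]
    · rcases eq_or_ne x 1 with rfl | hx1
      · show toF (w 1 1) = _
        rw [show w 1 1 = [false, true] by simp [w, subA], show w 1 0 = [false] by simp [w]]
        simp [toF, phiA]
      · rw [w_right_zero x hx1, toF_nil, map_one, Nat.add_zero, w_diag x (by omega), toF_nil]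
  · rcases Nat.eq_zero_or_pos x with rfl | hx
    · rcases eq_or_ne y 1 with rfl | hy1
      · show toF (w 0 1) = _
        rw [show w 0 1 = [true] by simp [w]]
        simp [toF, phiA]
      · rw [w_left_zero y hy1, w_left_zero (0+y) (by omega), toF_nil, map_one]
    · rw [w_subA x y hx hy, toF_flatMap_subA]

lemma key : ∀ n α β u v : ℕ, α + β ≤ n → α * u = β * v + 1 → 0 < u → u ≤ β →
    v < α → 1 ≤ α → 1 ≤ β →
    toF (w α β) =
      (toF (w v u) * (FreeGroup.of true)⁻¹) * (FreeGroup.of false * FreeGroup.of true) *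
        ((FreeGroup.of false)⁻¹ * toF (w (α - v) (β - u))) := by
  intro n
  induction n with
  | zero => intro α β u v hn; omega
  | succ n ih =>
    intro α β u v hn huv hu hu' hv hα hβ
    have huvZ : (α : ℤ) * u = β * v + 1 := by exact_mod_cast huv
    rcases lt_trichotomy α β with hlt | heq | hgt
    · -- α < β : w α β = subA (w α (β-α))
      have huv2 : v < u := by
        have h1 : α * v ≤ β * v := Nat.mul_le_mul (le_of_lt hlt) (le_refl v)
        have h2 : α * v < α * u := by linarith
        exact lt_of_mul_lt_mul_left h2 (Nat.zero_le α)
      have hbez : α * (u - v) = (β - α) * v + 1 := by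
        zify [le_of_lt huv2, le_of_lt hlt]
        linear_combination huvZ
      have hule : u - v ≤ β - α := by
        have h3 : (β - α) * v ≤ (β - α) * (α - 1) := Nat.mul_le_mul (le_refl _) (by omega)
        have h4 : (β - α) * (α - 1) + (β - α) = (β - α) * α := by
          rw [← Nat.mul_succ]; congr 1; omega
        have h5 : (β - α) * α = α * (β - α) := Nat.mul_comm _ _
        have h6 : α * (u - v) ≤ α * (β - α) := by
          have hba : 1 ≤ β - α := by omega
          linarith [hbez]
        exact Nat.le_of_mul_le_mul_left h6 (by omega)
      have hrec := phiA_w α (β - α)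
      rw [show α + (β - α) = β by omega] at hrec
      have IH := ih α (β - α) (u - v) v (by omega) hbez (by omega) hule hv hα (by omega)
      rw [hrec, IH]
      have e1 : phiA (toF (w v (u - v))) = toF (w v u) := by
        rw [← phiA_w, show v + (u - v) = u by omega]
      have e2 : phiA (toF (w (α - v) (β - α - (u - v)))) = toF (w (α - v) (β - u)) := by
        rw [← phiA_w, show α - v + (β - α - (u - v)) = β - u by omega]
      simp only [map_mul, map_inv, e1, e2]
      rw [show phiA (FreeGroup.of true) = FreeGroup.of true by simp [phiA],
        show phiA (FreeGroup.of false) = FreeGroup.of false * FreeGroup.of true by simp [phiA]]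
      group
    · -- α = β : forces α = β = 1, u = 1, v = 0
      subst heq
      have h1 : α * v < α * u := by linarith
      have huv2 : v < u := lt_of_mul_lt_mul_left h1 (Nat.zero_le α)
      have h2 : α * (v + 1) ≤ α * u := Nat.mul_le_mul (le_refl α) huv2
      have hα1 : α = 1 := by
        rw [Nat.mul_add, Nat.mul_one] at h2
        have : α ≤ 1 := by linarith
        omega
      subst hα1
      have hu1 : u = 1 := by omega
      have hv0 : v = 0 := by omega
      subst hu1; subst hv0
      rw [show w 1 1 = [false, true] by simp [w, subA], show w 0 1 = [true] by simp [w],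
        show (1:ℕ) - 0 = 1 by omega, show (1:ℕ) - 1 = 0 by omega,
        show w 1 0 = [false] by simp [w]]
      simp [toF]
    · -- α > β : w α β = subT (w (α-β) β)
      have huv2 : u ≤ v := by
        have h1 : (β + 1) * u ≤ α * u := Nat.mul_le_mul (by omega) (le_refl u)
        rw [Nat.add_mul, Nat.one_mul] at h1
        have h3 : β * u ≤ β * v := by linarith
        exact Nat.le_of_mul_le_mul_left h3 (by omega)
      have hbez : (α - β) * u = β * (v - u) + 1 := by
        zify [huv2, le_of_lt hgt]
        linear_combination huvZ
      have hvle : v - u < α - β := by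
        have h1 : (α - β) * u ≤ (α - β) * β := Nat.mul_le_mul (le_refl _) hu'
        have h2 : (α - β) * β = β * (α - β) := Nat.mul_comm _ _
        have h3 : β * (v - u) < β * (α - β) := by linarith [hbez]
        exact Nat.lt_of_mul_lt_mul_left h3
      have hrec := phiT_w (α - β) β
      rw [show α - β + β = α by omega] at hrec
      have IH := ih (α - β) β u (v - u) (by omega) hbez hu hu' hvle (by omega) hβ
      rw [hrec, IH]
      have e1 : phiT (toF (w (v - u) u)) = toF (w v u) := by
        rw [← phiT_w, show v - u + u = v by omega]
      have e2 : phiT (toF (w (α - β - (v - u)) (β - u))) = toF (w (α - v) (β - u)) := by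
        rw [← phiT_w, show α - β - (v - u) + (β - u) = α - v by omega]
      simp only [map_mul, map_inv, e1, e2]
      rw [show phiT (FreeGroup.of true) = FreeGroup.of false * FreeGroup.of true by simp [phiT],
        show phiT (FreeGroup.of false) = FreeGroup.of false by simp [phiT]]
      group

/-- In the free group `F(a,t)`, with `α·u − β·v = 1`, `0 < u ≤ β`, `0 ≤ v < α`,
`α, β ≥ 1`, one has `w α β = (w v u · t⁻¹) · a·t · (a⁻¹ · w (α−v) (β−u))`. -/
theorem stmt_5 (α β u v : ℕ) (huv : α * u = β * v + 1) (hu : 0 < u) (hu' : u ≤ β)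
    (hv : v < α) (hα : 1 ≤ α) (hβ : 1 ≤ β) :
    toF (w α β) =
      (toF (w v u) * (FreeGroup.of true)⁻¹) * (FreeGroup.of false * FreeGroup.of true) *
        ((FreeGroup.of false)⁻¹ * toF (w (α - v) (β - u))) := by
  exact key (α + β) α β u v (le_refl _) huv hu hu' hv hα hβ
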